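/- arXiv:1903.02661 — 3 statements merged into one kernel-verified Lean document; each statement's English description precedes it below -/
import Mathlib

section
/- With R defined as γᵀ(e − E·I)⁻¹γ and A⁻¹ := e − E·I − γ L⁰ γᵀ, one has the channel-level equivalence (R⁻¹ − L⁰)⁻¹ = γᵀ A γ, assuming all the indicated inverses exist. -/
open Matrix

/-- Channel-level equivalence defining the Kapur-Peierls operator:
`(R⁻¹ − L⁰)⁻¹ = γᵀ A γ` with `R = γᵀ (e − E·1)⁻¹ γ` and `A⁻¹ = e − E·1 − γ L⁰ γᵀ`. -/
theorem channel_level_equivalence {NL Nc : Type*} [Fintype NL] [Fintype Nc]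
    [DecidableEq NL] [DecidableEq Nc]
    (e : Matrix NL NL ℂ) (he : e.IsDiag) (γ : Matrix NL Nc ℂ) (L0 : Matrix Nc Nc ℂ) (E : ℂ)
    (h_e : IsUnit (e - E • (1 : Matrix NL NL ℂ)).det)
    (hR : IsUnit (γᵀ * (e - E • (1 : Matrix NL NL ℂ))⁻¹ * γ).det)
    (hRL : IsUnit ((γᵀ * (e - E • (1 : Matrix NL NL ℂ))⁻¹ * γ)⁻¹ - L0).det)
    (hA : IsUnit (e - E • (1 : Matrix NL NL ℂ) - γ * L0 * γᵀ).det) :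
    ((γᵀ * (e - E • (1 : Matrix NL NL ℂ))⁻¹ * γ)⁻¹ - L0)⁻¹
      = γᵀ * (e - E • (1 : Matrix NL NL ℂ) - γ * L0 * γᵀ)⁻¹ * γ := by
  set M : Matrix NL NL ℂ := e - E • (1 : Matrix NL NL ℂ) with hM
  set B : Matrix NL NL ℂ := M - γ * L0 * γᵀ with hB
  set R : Matrix Nc Nc ℂ := γᵀ * M⁻¹ * γ with hRdef
  set X : Matrix Nc Nc ℂ := γᵀ * B⁻¹ * γ with hXdef
  have h2 : M⁻¹ * M = 1 := nonsing_inv_mul _ h_e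
  have h3 : R * R⁻¹ = 1 := mul_nonsing_inv _ hR
  have h4 : R⁻¹ * R = 1 := nonsing_inv_mul _ hR
  have h5 : B * B⁻¹ = 1 := mul_nonsing_inv _ hA
  -- key : R = X - R * L0 * X
  have key : R = X - R * (L0 * X) := by
    have h6 : γᵀ * M⁻¹ * γ = γᵀ * M⁻¹ * ((M - γ * L0 * γᵀ) * B⁻¹) * γ := by
      rw [← hB, h5, Matrix.mul_one]
    calc R = γᵀ * M⁻¹ * ((M - γ * L0 * γᵀ) * B⁻¹) * γ := h6
      _ = X - R * (L0 * X) := by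
          simp only [Matrix.sub_mul, Matrix.mul_sub, Matrix.mul_assoc,
            Matrix.nonsing_inv_mul_cancel_left _ _ h_e, hXdef, hRdef]
  have main : (R⁻¹ - L0) * X = 1 := by
    have h7 : R * ((R⁻¹ - L0) * X) = R := by
      calc R * ((R⁻¹ - L0) * X) = (R * R⁻¹) * X - R * (L0 * X) := by
            simp only [Matrix.sub_mul, Matrix.mul_sub, Matrix.mul_assoc]
        _ = X - R * (L0 * X) := by rw [h3, Matrix.one_mul]
        _ = R := key.symm
    calc (R⁻¹ - L0) * X = (R⁻¹ * R) * ((R⁻¹ - L0) * X) := by rw [h4, Matrix.one_mul]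
      _ = R⁻¹ * (R * ((R⁻¹ - L0) * X)) := by rw [Matrix.mul_assoc]
      _ = R⁻¹ * R := by rw [h7]
      _ = 1 := h4
  exact inv_eq_right_inv main
end

section
/- (Diagonal divisibility and capped multiplicities, scalar-pole version) Let M be an m×n complex matrix and D(z) an n×n diagonal matrix of rational functions D_jj(z) = R_j(z)/P_j(z) where each P_j is a polynomial with simple roots. Let Q(z) be the product of the distinct P_j, each taken with multiplicity equal to the minimum of its multiplicity of occurrence among the diagonal entries and m. Then Q(z)·det(M D(z) Mᵀ) is a polynomial in z. -/
open Matrix Polynomial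
open scoped Classical

lemma aux_expand_det {m n : ℕ} (M : Matrix (Fin m) (Fin n) ℂ) (d : Fin n → ℂ) :
    (M * Matrix.diagonal d * Mᵀ).det
      = ∑ f : Fin m → Fin n, (∏ i, M i (f i) * d (f i))
          * (Matrix.of fun i k => M k (f i)).det := by
  have hrow : (fun i => (M * Matrix.diagonal d * Mᵀ) i)
      = fun i => ∑ j : Fin n, (M i j * d j) • (fun k => M k j : Fin m → ℂ) := by
    funext i k
    simp [Matrix.mul_apply, Matrix.mul_diagonal, Finset.sum_apply, mul_assoc,
      Matrix.diagonal_apply, mul_ite, ite_mul, mul_zero, zero_mul, Finset.sum_ite_eq,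
      Finset.sum_ite_eq', mul_comm]
  have h1 : (M * Matrix.diagonal d * Mᵀ).det
      = Matrix.detRowAlternating
          (fun i => ∑ j : Fin n, (M i j * d j) • (fun k => M k j : Fin m → ℂ)) := by
    rw [← hrow]
    rfl
  rw [h1]
  have h2 := MultilinearMap.map_sum
    (f := (Matrix.detRowAlternating (R := ℂ) (n := Fin m)).toMultilinearMap)
    (g := fun i j => (M i j * d j) • (fun k => M k j : Fin m → ℂ))
  refine h2.trans ?_
  refine Finset.sum_congr rfl fun f _ => ?_
  rw [MultilinearMap.map_smul_univ]
  rfl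

lemma aux_dvd {m n : ℕ} (P : Fin n → Polynomial ℂ) (f : Fin m → Fin n)
    (hf : Function.Injective f) :
    (∏ i, P (f i)) ∣
      ((Finset.univ.image P).prod fun p =>
        p ^ min (Finset.univ.filter (fun j => P j = p)).card m) := by
  set S : Finset (Fin n) := Finset.univ.image f with hS
  have h1 : (∏ i, P (f i)) = ∏ j ∈ S, P j := by
    rw [hS, Finset.prod_image (fun x _ y _ h => hf h)]
  have h2 : (∏ j ∈ S, P j)
      = ∏ p ∈ Finset.univ.image P, ∏ j ∈ S.filter (fun j => P j = p), P j := by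
    rw [Finset.prod_fiberwise_of_maps_to (fun j _ => Finset.mem_image_of_mem P (Finset.mem_univ j))]
  have h3 : ∀ p ∈ Finset.univ.image P,
      (∏ j ∈ S.filter (fun j => P j = p), P j) = p ^ (S.filter (fun j => P j = p)).card := by
    intro p _
    rw [Finset.prod_congr rfl (fun j hj => (Finset.mem_filter.mp hj).2), Finset.prod_const]
  rw [h1, h2, Finset.prod_congr rfl h3]
  refine Finset.prod_dvd_prod_of_dvd _ _ fun p _ => ?_
  refine pow_dvd_pow p (le_min ?_ ?_)
  · exact Finset.card_le_card (fun j hj => Finset.mem_filter.mpr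
      ⟨Finset.mem_univ j, (Finset.mem_filter.mp hj).2⟩)
  · calc (S.filter (fun j => P j = p)).card ≤ S.card :=
          Finset.card_le_card (Finset.filter_subset _ _)
      _ ≤ m := by
          rw [hS, Finset.card_image_of_injective _ hf, Finset.card_univ, Fintype.card_fin]

/-- Diagonal divisibility and capped multiplicities: for `M ∈ ℂ^{m×n}` and
`D(z) = diag(R_j(z)/P_j(z))` with each `P_j` having simple roots, the rational
function `Q(z)·det(M D(z) Mᵀ)` is a polynomial, where `Q` is the product of the
distinct `P_j`, each with multiplicity `min(multiplicity of occurrence, m)`. -/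
theorem diagonal_divisibility_capped_multiplicities (m n : ℕ)
    (M : Matrix (Fin m) (Fin n) ℂ) (R P : Fin n → Polynomial ℂ)
    (hP0 : ∀ j, P j ≠ 0) (hPsq : ∀ j, Squarefree (P j)) :
    ∃ q : Polynomial ℂ,
      ∀ z : ℂ, (∀ j, (P j).eval z ≠ 0) →
        ((Finset.univ.image P).prod fun p =>
            p ^ min (Finset.univ.filter (fun j => P j = p)).card m).eval z
          * (M * Matrix.diagonal (fun j => (R j).eval z / (P j).eval z) * Mᵀ).det
        = q.eval z := by
  set Q : Polynomial ℂ := (Finset.univ.image P).prod fun p =>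
      p ^ min (Finset.univ.filter (fun j => P j = p)).card m with hQdef
  refine ⟨∑ f : Fin m → Fin n, if hf : Function.Injective f then
      C ((∏ i, M i (f i)) * (Matrix.of fun i k => M k (f i)).det)
        * (∏ i, R (f i)) * (Q / ∏ i, P (f i)) else 0, ?_⟩
  intro z hz
  rw [aux_expand_det, Polynomial.eval_finset_sum, Finset.mul_sum]
  refine Finset.sum_congr rfl fun f _ => ?_
  by_cases hf : Function.Injective f
  · rw [dif_pos hf]
    have hPne : (∏ i, P (f i)) ≠ 0 :=
      Finset.prod_ne_zero_iff.mpr fun i _ => hP0 (f i)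
    have hPe : (∏ i, (P (f i)).eval z) ≠ 0 :=
      Finset.prod_ne_zero_iff.mpr fun i _ => hz (f i)
    have hQ' : (∏ i, P (f i)) * (Q / ∏ i, P (f i)) = Q :=
      EuclideanDomain.mul_div_cancel' hPne (aux_dvd P f hf)
    have hQev : Q.eval z = (∏ i, (P (f i)).eval z) * (Q / ∏ i, P (f i)).eval z := by
      conv_lhs => rw [← hQ']
      rw [eval_mul, eval_prod]
    have hprod : (∏ i, M i (f i) * ((R (f i)).eval z / (P (f i)).eval z))
        = ((∏ i, M i (f i)) * ∏ i, (R (f i)).eval z) / ∏ i, (P (f i)).eval z := by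
      rw [Finset.prod_mul_distrib, Finset.prod_div_distrib, mul_div_assoc]
    simp only [eval_mul, eval_C, eval_prod]
    rw [hQev, hprod]
    field_simp
  · rw [dif_neg hf]
    obtain ⟨a, b, hab, hne⟩ := Function.not_injective_iff.mp hf
    have hdet : (Matrix.of fun i k => M k (f i)).det = 0 := by
      refine Matrix.det_zero_of_row_eq hne ?_
      funext k
      show M k (f a) = M k (f b)
      rw [hab]
    rw [hdet]
    simp
end

section
/- Pole cancellation in the scattering matrix (one-channel case): let O, I : ℂ → ℂ be holomorphic with constant Wronskian ρ-scaled relation O'(ω)I(ω) − I'(ω)O(ω) = 2i for all ω, and suppose O(ω₀) = 0 with O'(ω₀) ≠ 0. Define R_L near ω₀ so that R_L(ρ)·(O(ρ)·g(ρ) − ρO'(ρ)) = O(ρ) for some holomorphic g (the Kapur-Peierls relation). Then the function U(ρ) = O(ρ)⁻¹·(I(ρ) + 2i·ρ·R_L(ρ)·O(ρ)⁻¹) extends holomorphically across ω₀, i.e. the apparent pole at ω₀ is removable. -/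
open Complex Filter

private lemma analyticAt_deriv {f : ℂ → ℂ} {x : ℂ} (h : AnalyticAt ℂ f x) :
    AnalyticAt ℂ (deriv f) x := by
  obtain ⟨s, hs, h⟩ := h.exists_mem_nhds_analyticOnNhd
  exact h.deriv x (mem_of_mem_nhds hs)

/-- Pole cancellation in the scattering matrix (one-channel case): if `O, I` are
holomorphic near `ω₀ ≠ 0` with constant Wronskian `O'I − I'O = 2i`, `O(ω₀) = 0` with
`O'(ω₀) ≠ 0`, and `R_L(ρ) = O(ρ)/(O(ρ)g(ρ) − ρO'(ρ))` for holomorphic `g`, then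
`U(ρ) = O(ρ)⁻¹(I(ρ) + 2iρ R_L(ρ) O(ρ)⁻¹)` extends holomorphically across `ω₀`. -/
theorem scattering_pole_cancellation (ω₀ : ℂ) (hω : ω₀ ≠ 0) (O I g : ℂ → ℂ)
    (hO : AnalyticAt ℂ O ω₀) (hI : AnalyticAt ℂ I ω₀) (hg : AnalyticAt ℂ g ω₀)
    (hW : ∀ᶠ ρ in nhds ω₀, deriv O ρ * I ρ - deriv I ρ * O ρ = 2 * Complex.I)
    (h0 : O ω₀ = 0) (h1 : deriv O ω₀ ≠ 0) :
    ∃ V : ℂ → ℂ, AnalyticAt ℂ V ω₀ ∧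
      ∀ᶠ ρ in nhdsWithin ω₀ {ω₀}ᶜ,
        V ρ = (I ρ + 2 * Complex.I * ρ
            * (O ρ / (O ρ * g ρ - ρ * deriv O ρ)) / O ρ) / O ρ := by
  set D : ℂ → ℂ := fun ρ => O ρ * g ρ - ρ * deriv O ρ with hDdef
  have hD0 : D ω₀ ≠ 0 := by
    simp only [hDdef, h0, zero_mul, zero_sub, neg_ne_zero]
    exact mul_ne_zero hω h1
  have hDa : AnalyticAt ℂ D ω₀ :=
    (hO.mul hg).sub (analyticAt_id.mul (analyticAt_deriv hO))
  refine ⟨fun ρ => (I ρ * g ρ - ρ * deriv I ρ) / D ρ, ?_, ?_⟩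
  · exact ((hI.mul hg).sub (analyticAt_id.mul (analyticAt_deriv hI))).div hDa hD0
  · -- O is eventually nonzero on the punctured neighborhood
    have hOne : ∀ᶠ ρ in nhdsWithin ω₀ {ω₀}ᶜ, O ρ ≠ 0 := by
      rcases hO.eventually_eq_zero_or_eventually_ne_zero with h | h
      · exfalso
        apply h1
        have h' : O =ᶠ[nhds ω₀] (fun _ => (0 : ℂ)) := h
        have := h'.deriv_eq
        simpa using this
      · exact h
    have hDne : ∀ᶠ ρ in nhdsWithin ω₀ {ω₀}ᶜ, D ρ ≠ 0 :=
      (hDa.continuousAt.eventually_ne hD0).filter_mono nhdsWithin_le_nhds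
    have hW' : ∀ᶠ ρ in nhdsWithin ω₀ {ω₀}ᶜ,
        deriv O ρ * I ρ - deriv I ρ * O ρ = 2 * Complex.I :=
      hW.filter_mono nhdsWithin_le_nhds
    filter_upwards [hOne, hDne, hW'] with ρ hO1 hD1 hw
    have key : (I ρ * g ρ - ρ * deriv I ρ) * O ρ
        = (I ρ * D ρ + 2 * Complex.I * ρ) := by
      simp only [hDdef]
      rw [← hw]; ring
    simp only [hDdef] at key hD1 ⊢
    have hD2 : g ρ * O ρ - ρ * deriv O ρ ≠ 0 := by rw [mul_comm]; exact hD1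
    field_simp
    linear_combination key
end
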